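/- Fix ω > 0, γ > 0, β > 0 and p with 0 ≤ p < p_e, where p_e = 1/(e^{2ωβ} + 1) and λ = γ/(2p_e − 1) (a colder initial probe). Then there exists t > 0 such that δ(t)² > α(t), where δ(t) = 1 − e^{λt} + 2t(p_e − p)(λ²/γ) e^{λt} and α(t) = 1 − a e^{2λt} + b e^{λt} with a = (p_e − p)²/(p_e(1 − p_e)), b = (p_e − p)(2p_e − 1)/(p_e(1 − p_e)). Hence a colder probe achieves transient quantum Fisher information strictly exceeding the steady-state value. -/

import Mathlib

/-- For a colder initial probe (`0 ≤ p < p_e`), there exists a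
finite time `t > 0` with `δ(t)² > α(t)`: a colder probe achieves transient quantum
Fisher information strictly exceeding the steady-state value. -/
theorem cold_probe_stmt_15 (ω γ β p : ℝ) (hω : 0 < ω) (hγ : 0 < γ) (hβ : 0 < β)
    (pe lam a b : ℝ)
    (hpe : pe = 1 / (Real.exp (2 * ω * β) + 1))
    (hp0 : 0 ≤ p) (hpcold : p < pe)
    (hlam : lam = γ / (2 * pe - 1))
    (ha : a = (pe - p) ^ 2 / (pe * (1 - pe)))
    (hb : b = (pe - p) * (2 * pe - 1) / (pe * (1 - pe))) :
    ∃ t : ℝ, 0 < t ∧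
      (1 - Real.exp (lam * t) + 2 * t * (pe - p) * (lam ^ 2 / γ) * Real.exp (lam * t)) ^ 2 >
        1 - a * Real.exp (2 * lam * t) + b * Real.exp (lam * t) := by
  have hE : 1 < Real.exp (2 * ω * β) := by
    have := Real.exp_lt_exp.mpr (show (0:ℝ) < 2 * ω * β by positivity)
    simpa using this
  have hpe0 : 0 < pe := by
    rw [hpe]; positivity
  have hpehalf : pe < 1 / 2 := by
    rw [hpe]
    rw [div_lt_div_iff₀ (by positivity) (by norm_num)]
    linarith
  have hden : 2 * pe - 1 < 0 := by linarith
  have hlam0 : lam < 0 := by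
    rw [hlam]; exact div_neg_of_pos_of_neg hγ hden
  have hlamsq : 0 < lam ^ 2 := by nlinarith
  have hd : 0 < pe - p := by linarith
  have hape : 0 < pe * (1 - pe) := by nlinarith
  have hagt : 0 < a := by rw [ha]; positivity
  have hbneg : b < 0 := by
    rw [hb]
    apply div_neg_of_neg_of_pos _ hape
    nlinarith
  have hden2 : 0 < 2 * (pe - p) * lam ^ 2 := by nlinarith
  refine ⟨γ / (2 * (pe - p) * lam ^ 2), div_pos hγ hden2, ?_⟩
  set t := γ / (2 * (pe - p) * lam ^ 2) with ht
  have hct : 2 * t * (pe - p) * (lam ^ 2 / γ) = 1 := by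
    rw [ht]; field_simp [hlam0.ne]
  have hx : 0 < Real.exp (lam * t) := Real.exp_pos _
  have hx2 : Real.exp (2 * lam * t) = Real.exp (lam * t) ^ 2 := by
    rw [← Real.exp_nat_mul]; ring_nf
  have hδ : 1 - Real.exp (lam * t) + 2 * t * (pe - p) * (lam ^ 2 / γ) * Real.exp (lam * t)
      = 1 := by rw [hct]; ring
  rw [hδ, hx2]
  nlinarith [mul_pos hagt (mul_pos hx hx), mul_neg_of_neg_of_pos hbneg hx]
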